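/- For all real λ > 0 and μ > 0, every real φ, all complex y₁ and y₂, and every integer n ≥ 0, the Meixner–Pollaczek polynomials satisfy the convolution identity P_n^{(λ+μ)}(y₁+y₂; φ) = Σ_{k=0}^n P_k^{(λ)}(y₁; φ) · P_{n−k}^{(μ)}(y₂; φ). -/

import Mathlib

/-- The Pochhammer symbol `(a)_k = a (a+1) ⋯ (a+k-1)` for complex `a`. -/
noncomputable def pochC (a : ℂ) (k : ℕ) : ℂ := ∏ i ∈ Finset.range k, (a + i)
@[simp] lemma pochC_zero (a : ℂ) : pochC a 0 = 1 := by simp [pochC]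
lemma pochC_succ (a : ℂ) (k : ℕ) : pochC a (k+1) = pochC a k * (a + k) := by
  simp [pochC, Finset.prod_range_succ]
lemma pochC_add_nat (a : ℂ) (k m : ℕ) :
    pochC a (k + m) = pochC a k * pochC (a + k) m := by
  simp [pochC, Finset.prod_range_add, add_assoc]
lemma pochC_pos_ne_zero (r : ℝ) (hr : 0 < r) (k : ℕ) : pochC (r : ℂ) k ≠ 0 := by
  refine Finset.prod_ne_zero_iff.mpr fun i _ => ?_
  have : ((r : ℂ) + i) = ((r + i : ℝ) : ℂ) := by push_cast; ring
  rw [this, Complex.ofReal_ne_zero]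
  positivity
lemma pochC_neg_nat (n k : ℕ) (h : k ≤ n) :
    pochC (-(n : ℂ)) k * ((n - k).factorial : ℂ) = (-1) ^ k * (n.factorial : ℂ) := by
  induction k with
  | zero => simp
  | succ k ih =>
    have hk : k ≤ n := le_of_lt h
    have h1 : n - k = (n - (k+1)) + 1 := by omega
    have h2 : pochC (-(n:ℂ)) (k+1) = pochC (-(n:ℂ)) k * (-(n:ℂ) + k) := pochC_succ _ _
    have h3 : (-(n:ℂ) + k) = -(((n - k : ℕ) : ℂ)) := by
      have : ((n - k : ℕ) : ℂ) = (n : ℂ) - k := by push_cast [Nat.cast_sub hk]; ring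
      rw [this]; ring
    have h4 : ((n - k).factorial : ℂ) = ((n - k : ℕ) : ℂ) * ((n - (k+1)).factorial : ℂ) := by
      rw [h1]; push_cast [Nat.factorial_succ]; ring
    have := ih hk
    calc pochC (-(n:ℂ)) (k+1) * ((n - (k+1)).factorial : ℂ)
        = -(pochC (-(n:ℂ)) k * (((n - k : ℕ):ℂ) * ((n - (k+1)).factorial : ℂ))) := by
          rw [h2, h3]; ring
      _ = -(pochC (-(n:ℂ)) k * ((n - k).factorial : ℂ)) := by rw [h4]
      _ = (-1)^(k+1) * (n.factorial : ℂ) := by rw [this]; ring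

lemma pochC_one_add (a : ℂ) (m : ℕ) : pochC a (1 + m) = a * pochC (a + 1) m := by
  rw [pochC_add_nat]; simp [pochC]

lemma pochC_vandermonde (N : ℕ) (a b : ℂ) :
    pochC (a + b) N =
      ∑ m ∈ Finset.range (N + 1), (N.choose m : ℂ) * pochC a m * pochC b (N - m) := by
  induction N generalizing a b with
  | zero => simp
  | succ N ih =>
    set P := pochC (a + b) N with hP
    set M := ∑ m ∈ Finset.range (N+1),
      (N.choose m : ℂ) * pochC a m * pochC b (N - m) * (m:ℂ) with hM
    rw [Finset.sum_range_succ'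
      (fun m => ((N+1).choose m : ℂ) * pochC a m * pochC b (N + 1 - m)) (N+1)]
    have hsplit : ∀ m ∈ Finset.range (N+1),
        (((N+1).choose (m+1) : ℕ) : ℂ) * pochC a (m+1) * pochC b (N + 1 - (m+1))
        = ((N.choose m : ℂ) * pochC a m * pochC b (N - m) * (a + m)
          + (N.choose (m+1) : ℂ) * pochC a (m+1) * pochC b (N - m)) := by
      intro m hm
      rw [Nat.succ_sub_succ, Nat.choose_succ_succ]
      push_cast
      rw [pochC_succ]
      ring
    rw [Finset.sum_congr rfl hsplit, Finset.sum_add_distrib]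
    have hA : ∑ m ∈ Finset.range (N+1),
        (N.choose m : ℂ) * pochC a m * pochC b (N - m) * (a + m) = a * P + M := by
      rw [hP, ih, Finset.mul_sum, hM, ← Finset.sum_add_distrib]
      exact Finset.sum_congr rfl fun m hm => by ring
    have hB : (∑ m ∈ Finset.range (N+1),
          (N.choose (m+1) : ℂ) * pochC a (m+1) * pochC b (N - m))
        + (((N+1).choose 0 : ℕ) : ℂ) * pochC a 0 * pochC b (N + 1 - 0)
        = (b + N) * P - M := by
      have g1 : ∑ m ∈ Finset.range (N+2),
            (N.choose m : ℂ) * pochC a m * pochC b (N + 1 - m)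
          = (∑ m ∈ Finset.range (N+1),
              (N.choose (m+1) : ℂ) * pochC a (m+1) * pochC b (N + 1 - (m+1)))
            + (N.choose 0 : ℂ) * pochC a 0 * pochC b (N + 1 - 0) :=
        Finset.sum_range_succ' _ (N+1)
      have g2 : ∑ m ∈ Finset.range (N+2),
            (N.choose m : ℂ) * pochC a m * pochC b (N + 1 - m)
          = ∑ m ∈ Finset.range (N+1),
            (N.choose m : ℂ) * pochC a m * pochC b (N + 1 - m) := by
        rw [Finset.sum_range_succ]
        simp
      have g3 : ∑ m ∈ Finset.range (N+1),
            (N.choose m : ℂ) * pochC a m * pochC b (N + 1 - m)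
          = (b + N) * P - M := by
        rw [eq_sub_iff_add_eq, hP, ih, Finset.mul_sum, hM, ← Finset.sum_add_distrib]
        refine Finset.sum_congr rfl fun m hm => ?_
        have hm' : m ≤ N := Nat.lt_succ_iff.mp (Finset.mem_range.mp hm)
        have h1 : N + 1 - m = (N - m) + 1 := by omega
        have h2 : ((N - m : ℕ) : ℂ) = (N : ℂ) - m := by push_cast [Nat.cast_sub hm']; ring
        rw [h1, pochC_succ, h2]
        ring
      have g4 : ∀ m ∈ Finset.range (N+1),
          (N.choose (m+1) : ℂ) * pochC a (m+1) * pochC b (N + 1 - (m+1))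
          = (N.choose (m+1) : ℂ) * pochC a (m+1) * pochC b (N - m) := by
        intro m hm; rw [Nat.succ_sub_succ]
      rw [Finset.sum_congr rfl g4] at g1
      have : (((N+1).choose 0 : ℕ) : ℂ) = (N.choose 0 : ℂ) := by simp
      rw [this, ← g1, g2, g3]
    rw [hA, add_assoc, hB]
    have : pochC (a + b) (N+1) = P * (a + b + N) := pochC_succ _ _
    rw [this]
    ring

lemma pochC_key (N : ℕ) : ∀ c d : ℂ,
    ∑ m ∈ Finset.range (N + 1),
      (-1) ^ m * (N.choose m : ℂ) * pochC c m * pochC (d + m) (N - m)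
    = pochC (d - c) N := by
  induction N with
  | zero => intro c d; simp
  | succ N ih =>
    intro c d
    rw [Finset.sum_range_succ'
      (fun m => (-1) ^ m * ((N+1).choose m : ℂ) * pochC c m * pochC (d + m) (N + 1 - m)) (N+1)]
    have hsplit : ∀ m ∈ Finset.range (N+1),
        (-1:ℂ) ^ (m+1) * (((N+1).choose (m+1) : ℕ) : ℂ) * pochC c (m+1)
            * pochC (d + ((m+1:ℕ):ℂ)) (N + 1 - (m+1))
        = (-1:ℂ) ^ (m+1) * (N.choose m : ℂ) * pochC c (m+1) * pochC (d + ((m+1:ℕ):ℂ)) (N - m)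
          + (-1:ℂ) ^ (m+1) * (N.choose (m+1) : ℂ) * pochC c (m+1) * pochC (d + ((m+1:ℕ):ℂ)) (N - m) := by
      intro m hm
      rw [Nat.succ_sub_succ, Nat.choose_succ_succ]
      push_cast
      ring
    rw [Finset.sum_congr rfl hsplit, Finset.sum_add_distrib]
    have hA : ∑ m ∈ Finset.range (N+1),
        (-1:ℂ) ^ (m+1) * (N.choose m : ℂ) * pochC c (m+1) * pochC (d + ((m+1:ℕ):ℂ)) (N - m)
        = -c * pochC (d - c) N := by
      have hthis := ih (c+1) (d+1)
      have h0 : d + 1 - (c + 1) = d - c := by ring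
      rw [h0] at hthis
      rw [← hthis, Finset.mul_sum]
      refine Finset.sum_congr rfl fun m hm => ?_
      have h1 : pochC c (m+1) = c * pochC (c+1) m := by
        rw [add_comm m 1, pochC_one_add]
      have h2 : d + ((m+1 : ℕ):ℂ) = (d + 1) + (m : ℕ) := by push_cast; ring
      rw [h1, h2]
      ring
    have hB : (∑ m ∈ Finset.range (N+1),
          (-1:ℂ) ^ (m+1) * (N.choose (m+1) : ℂ) * pochC c (m+1) * pochC (d + ((m+1:ℕ):ℂ)) (N - m))
        + (-1:ℂ) ^ 0 * (((N+1).choose 0 : ℕ) : ℂ) * pochC c 0 * pochC (d + (0:ℕ)) (N + 1 - 0)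
        = (d + N) * pochC (d - c) N := by
      have g1 : ∑ m ∈ Finset.range (N+2),
            (-1:ℂ) ^ m * (N.choose m : ℂ) * pochC c m * pochC (d + m) (N + 1 - m)
          = (∑ m ∈ Finset.range (N+1),
              (-1:ℂ) ^ (m+1) * (N.choose (m+1) : ℂ) * pochC c (m+1)
                * pochC (d + ((m+1:ℕ):ℂ)) (N + 1 - (m+1)))
            + (-1:ℂ) ^ 0 * (N.choose 0 : ℂ) * pochC c 0 * pochC (d + (0:ℕ)) (N + 1 - 0) :=
        Finset.sum_range_succ' _ (N+1)
      have g2 : ∑ m ∈ Finset.range (N+2),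
            (-1:ℂ) ^ m * (N.choose m : ℂ) * pochC c m * pochC (d + m) (N + 1 - m)
          = ∑ m ∈ Finset.range (N+1),
            (-1:ℂ) ^ m * (N.choose m : ℂ) * pochC c m * pochC (d + m) (N + 1 - m) := by
        rw [Finset.sum_range_succ]; simp
      have g3 : ∑ m ∈ Finset.range (N+1),
            (-1:ℂ) ^ m * (N.choose m : ℂ) * pochC c m * pochC (d + m) (N + 1 - m)
          = (d + N) * pochC (d - c) N := by
        rw [← ih c d, Finset.mul_sum]
        refine Finset.sum_congr rfl fun m hm => ?_
        have hm' : m ≤ N := Nat.lt_succ_iff.mp (Finset.mem_range.mp hm)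
        have h1 : N + 1 - m = (N - m) + 1 := by omega
        have h2 : (d + m) + ((N - m : ℕ) : ℂ) = d + N := by
          push_cast [Nat.cast_sub hm']; ring
        rw [h1, pochC_succ, h2]
        ring
      have g4 : ∀ m ∈ Finset.range (N+1),
          (-1:ℂ) ^ (m+1) * (N.choose (m+1) : ℂ) * pochC c (m+1)
            * pochC (d + ((m+1:ℕ):ℂ)) (N + 1 - (m+1))
          = (-1:ℂ) ^ (m+1) * (N.choose (m+1) : ℂ) * pochC c (m+1)
            * pochC (d + ((m+1:ℕ):ℂ)) (N - m) := by
        intro m hm; rw [Nat.succ_sub_succ]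
      rw [Finset.sum_congr rfl g4] at g1
      have h0 : (((N+1).choose 0 : ℕ) : ℂ) = (N.choose 0 : ℂ) := by simp
      rw [h0, ← g1, g2, g3]
    rw [add_assoc, hA, hB, pochC_succ]
    ring


lemma factC_ne (k : ℕ) : ((k.factorial : ℂ)) ≠ 0 :=
  Nat.cast_ne_zero.mpr k.factorial_ne_zero

lemma pochC_key₂ (N : ℕ) (c d : ℂ) :
    ∑ m ∈ Finset.range (N + 1),
      (-1) ^ m * pochC c m * pochC (d + m) (N - m)
        / ((m.factorial : ℂ) * ((N - m).factorial : ℂ))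
    = pochC (d - c) N / (N.factorial : ℂ) := by
  rw [← pochC_key N c d, Finset.sum_div]
  refine Finset.sum_congr rfl fun m hm => ?_
  have hm' : m ≤ N := Nat.lt_succ_iff.mp (Finset.mem_range.mp hm)
  have hch : (N.choose m : ℂ) * ((m.factorial : ℂ) * ((N - m).factorial : ℂ))
      = (N.factorial : ℂ) := by
    rw [← Nat.cast_mul, ← Nat.cast_mul, ← mul_assoc]
    exact_mod_cast congrArg (Nat.cast (R := ℂ)) (Nat.choose_mul_factorial_mul_factorial hm')
  rw [div_eq_div_iff (mul_ne_zero (factC_ne m) (factC_ne (N-m))) (factC_ne N)]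
  calc (-1:ℂ) ^ m * pochC c m * pochC (d + ↑m) (N - m) * (N.factorial : ℂ)
      = (-1) ^ m * pochC c m * pochC (d + ↑m) (N - m)
          * ((N.choose m : ℂ) * ((m.factorial : ℂ) * ((N - m).factorial : ℂ))) := by rw [hch]
    _ = (-1) ^ m * ↑(N.choose m) * pochC c m * pochC (d + ↑m) (N - m)
          * ((m.factorial : ℂ) * ((N - m).factorial : ℂ)) := by ring

/-- The Meixner–Pollaczek polynomial
`P_n^{(λ)}(y; φ) = ((2λ)_n / n!) e^{inφ}
  Σ_{k=0}^n [((-n)_k (λ + iy)_k) / ((2λ)_k k!)] (1 - e^{-2iφ})^k`. -/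
noncomputable def meixnerPollaczek (n : ℕ) (lam φ : ℝ) (y : ℂ) : ℂ :=
  pochC (2 * lam) n / (n.factorial : ℂ) * Complex.exp ((n : ℂ) * φ * Complex.I) *
    ∑ k ∈ Finset.range (n + 1),
      pochC (-(n : ℂ)) k * pochC ((lam : ℂ) + Complex.I * y) k /
        (pochC (2 * lam) k * (k.factorial : ℂ)) *
        (1 - Complex.exp (-(2 * (φ : ℂ) * Complex.I))) ^ k

noncomputable def Acoef (lam φ : ℝ) (y : ℂ) (m : ℕ) : ℂ :=
  pochC ((lam:ℂ) - Complex.I * y) m * Complex.exp ((m:ℂ) * φ * Complex.I) / (m.factorial : ℂ)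
noncomputable def Bcoef (lam φ : ℝ) (y : ℂ) (m : ℕ) : ℂ :=
  pochC ((lam:ℂ) + Complex.I * y) m * Complex.exp (-((m:ℂ) * φ * Complex.I)) / (m.factorial : ℂ)

lemma stepA (lam φ : ℝ) (y : ℂ) (hlam : 0 < lam) (n : ℕ) :
    meixnerPollaczek n lam φ y =
      ∑ m ∈ Finset.range (n+1), Acoef lam φ y m * Bcoef lam φ y (n - m) := by
  set a : ℂ := (lam:ℂ) + Complex.I * y with ha
  set b : ℂ := (lam:ℂ) - Complex.I * y with hb
  set w : ℂ := Complex.exp (-(2 * (φ:ℂ) * Complex.I)) with hw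
  set E : ℂ := Complex.exp ((n:ℂ) * φ * Complex.I) with hE
  have hpoch2 : ∀ k, pochC (2 * (lam:ℂ)) k ≠ 0 := by
    intro k
    have : (2 * (lam:ℂ)) = ((2 * lam : ℝ) : ℂ) := by push_cast; ring
    rw [this]
    exact pochC_pos_ne_zero _ (by linarith) k
  -- RHS rewrite
  have hRHS : ∑ m ∈ Finset.range (n+1), Acoef lam φ y m * Bcoef lam φ y (n - m)
      = ∑ j ∈ Finset.range (n+1),
          E * pochC b (n - j) * pochC a j * w ^ j
            / ((j.factorial : ℂ) * ((n - j).factorial : ℂ)) := by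
    rw [← Finset.sum_range_reflect (fun m => Acoef lam φ y m * Bcoef lam φ y (n - m)) (n+1)]
    refine Finset.sum_congr rfl fun j hj => ?_
    have hj' : j ≤ n := Nat.lt_succ_iff.mp (Finset.mem_range.mp hj)
    have h1 : n + 1 - 1 - j = n - j := by omega
    have h2 : n - (n - j) = j := by omega
    rw [h1, h2]
    unfold Acoef Bcoef
    rw [← ha, ← hb]
    have hcast : ((n - j : ℕ) : ℂ) = (n : ℂ) - j := by push_cast [Nat.cast_sub hj']; ring
    have hexp : Complex.exp (((n-j:ℕ):ℂ) * φ * Complex.I) * Complex.exp (-((j:ℂ) * φ * Complex.I))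
        = E * w ^ j := by
      rw [hE, hw, ← Complex.exp_nat_mul, ← Complex.exp_add, ← Complex.exp_add, hcast]
      ring_nf
    rw [div_mul_div_comm, div_eq_div_iff
      (mul_ne_zero (factC_ne (n-j)) (factC_ne j)) (mul_ne_zero (factC_ne j) (factC_ne (n-j)))]
    linear_combination (pochC b (n - j) * pochC a j * (j.factorial : ℂ)
      * ((n - j).factorial : ℂ)) * hexp
  rw [hRHS]
  unfold meixnerPollaczek
  rw [← ha, ← hw, ← hE, Finset.mul_sum]
  have h1 : ∀ k ∈ Finset.range (n+1),
      pochC (2 * (lam:ℂ)) n / (n.factorial : ℂ) * E *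
        (pochC (-(n : ℂ)) k * pochC a k /
          (pochC (2 * (lam:ℂ)) k * (k.factorial : ℂ)) * (1 - w) ^ k)
      = ∑ j ∈ Finset.range (n+1),
          E * pochC (2 * (lam:ℂ) + k) (n - k) * pochC a k * ((k.choose j : ℕ) : ℂ)
            * (-1) ^ (k + j) * w ^ j / ((k.factorial : ℂ) * ((n - k).factorial : ℂ)) := by
    intro k hk
    have hkn : k ≤ n := Nat.lt_succ_iff.mp (Finset.mem_range.mp hk)
    have hsp : pochC (2*(lam:ℂ)) n = pochC (2*(lam:ℂ)) k * pochC (2*(lam:ℂ) + k) (n-k) := by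
      have hkk : k + (n-k) = n := by omega
      calc pochC (2*(lam:ℂ)) n = pochC (2*(lam:ℂ)) (k + (n-k)) := by rw [hkk]
        _ = _ := pochC_add_nat _ _ _
    have hneg : pochC (-(n:ℂ)) k = (-1)^k * (n.factorial:ℂ) / ((n-k).factorial:ℂ) :=
      (eq_div_iff (factC_ne _)).mpr (pochC_neg_nat n k hkn)
    have hpow : (1 - w)^k = ∑ j ∈ Finset.range (k+1), (-1)^j * w^j * ((k.choose j : ℕ):ℂ) := by
      have h := add_pow (-w) 1 k
      simp only [one_pow, mul_one] at h
      calc (1-w)^k = (-w + 1)^k := by ring_nf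
        _ = ∑ j ∈ Finset.range (k+1), (-w)^j * ((k.choose j:ℕ):ℂ) := h
        _ = _ := Finset.sum_congr rfl fun j _ => by rw [neg_pow]
    rw [hsp, hneg, hpow, Finset.mul_sum, Finset.mul_sum]
    have hsmall : ∀ j ∈ Finset.range (k+1),
        pochC (2*(lam:ℂ)) k * pochC (2*(lam:ℂ) + k) (n-k) / (n.factorial : ℂ) * E *
          ((-1)^k * (n.factorial:ℂ) / ((n-k).factorial:ℂ) * pochC a k /
            (pochC (2 * (lam:ℂ)) k * (k.factorial : ℂ)) * ((-1)^j * w^j * ((k.choose j:ℕ):ℂ)))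
        = E * pochC (2 * (lam:ℂ) + k) (n - k) * pochC a k * ((k.choose j : ℕ) : ℂ)
            * (-1) ^ (k + j) * w ^ j / ((k.factorial : ℂ) * ((n - k).factorial : ℂ)) := by
      intro j hj
      have hz := hpoch2 k
      field_simp [hz, factC_ne]
      linear_combination (pochC (2 * (lam:ℂ) + (k:ℂ)) (n - k) * E * pochC a k * w ^ j
        * ((k.choose j : ℕ) : ℂ) * (((n - k).factorial : ℂ))⁻¹ * ((k.factorial : ℂ))⁻¹
        * (-1:ℂ) ^ k * (-1:ℂ) ^ j) * mul_inv_cancel₀ (factC_ne n)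
    rw [Finset.sum_congr rfl hsmall]
    refine Finset.sum_subset (Finset.range_subset_range.mpr (by omega)) fun j hj hj' => ?_
    have : k < j := by
      simp only [Finset.mem_range, not_lt] at hj'
      omega
    simp [Nat.choose_eq_zero_of_lt this]
  rw [Finset.sum_congr rfl h1, Finset.sum_comm]
  refine Finset.sum_congr rfl fun j hj => ?_
  have hjn : j ≤ n := Nat.lt_succ_iff.mp (Finset.mem_range.mp hj)
  have hrange : n + 1 = j + ((n - j) + 1) := by omega
  rw [hrange, Finset.sum_range_add]
  have hzero : ∑ k ∈ Finset.range j,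
      E * pochC (2 * (lam:ℂ) + k) (n - k) * pochC a k * ((k.choose j : ℕ) : ℂ)
        * (-1) ^ (k + j) * w ^ j / ((k.factorial : ℂ) * ((n - k).factorial : ℂ)) = 0 := by
    refine Finset.sum_eq_zero fun k hk => ?_
    have : k < j := Finset.mem_range.mp hk
    simp [Nat.choose_eq_zero_of_lt this]
  rw [hzero, zero_add]
  have hterm : ∀ m ∈ Finset.range ((n - j) + 1),
      E * pochC (2 * (lam:ℂ) + ((j + m : ℕ):ℂ)) (n - (j + m)) * pochC a (j + m)
          * (((j + m).choose j : ℕ) : ℂ) * (-1) ^ ((j + m) + j) * w ^ j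
          / (((j + m).factorial : ℂ) * ((n - (j + m)).factorial : ℂ))
      = (E * pochC a j * w ^ j / (j.factorial : ℂ)) *
          ((-1) ^ m * pochC (a + j) m * pochC ((2 * (lam:ℂ) + j) + m) ((n - j) - m)
            / ((m.factorial : ℂ) * (((n - j) - m).factorial : ℂ))) := by
    intro m hm
    have hmn : m ≤ n - j := Nat.lt_succ_iff.mp (Finset.mem_range.mp hm)
    have hsub : n - (j + m) = (n - j) - m := by omega
    have hc1 : (2 * (lam:ℂ) + ((j + m : ℕ):ℂ)) = (2 * (lam:ℂ) + j) + m := by push_cast; ring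
    have hpa : pochC a (j + m) = pochC a j * pochC (a + j) m := pochC_add_nat _ _ _
    have hsign : ((-1:ℂ)) ^ ((j + m) + j) = (-1) ^ m := by
      have : (j + m) + j = 2 * j + m := by omega
      rw [this, pow_add, pow_mul]
      simp
    have hch : (((j + m).choose j : ℕ) : ℂ) * ((j.factorial : ℂ) * (m.factorial : ℂ))
        = ((j + m).factorial : ℂ) := by
      have := Nat.choose_mul_factorial_mul_factorial (Nat.le_add_right j m)
      simp only [Nat.add_sub_cancel_left] at this
      rw [← Nat.cast_mul, ← Nat.cast_mul, ← mul_assoc]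
      exact_mod_cast congrArg (Nat.cast (R := ℂ)) this
    rw [hsub, hc1, hpa, hsign, div_mul_div_comm,
      div_eq_div_iff (mul_ne_zero (factC_ne _) (factC_ne _))
        (mul_ne_zero (factC_ne _) (mul_ne_zero (factC_ne _) (factC_ne _)))]
    linear_combination (E * pochC a j * pochC (a + ((j:ℕ):ℂ)) m
      * pochC (2 * (lam:ℂ) + ((j:ℕ):ℂ) + ((m:ℕ):ℂ)) (n - j - m) * (-1:ℂ)^m * w ^ j
      * (((n - j) - m).factorial : ℂ)) * hch
  rw [Finset.sum_congr rfl hterm, ← Finset.mul_sum, pochC_key₂]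
  have hdc : (2 * (lam:ℂ) + j) - (a + j) = b := by rw [ha, hb]; ring
  rw [hdc]
  rw [div_mul_div_comm]
  ring

noncomputable def FA (lam φ : ℝ) (y : ℂ) : PowerSeries ℂ := PowerSeries.mk (Acoef lam φ y)
noncomputable def FB (lam φ : ℝ) (y : ℂ) : PowerSeries ℂ := PowerSeries.mk (Bcoef lam φ y)

lemma coeff_FA_FB (lam φ : ℝ) (y : ℂ) (n : ℕ) :
    (PowerSeries.coeff n) (FA lam φ y * FB lam φ y)
      = ∑ m ∈ Finset.range (n+1), Acoef lam φ y m * Bcoef lam φ y (n - m) := by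
  rw [PowerSeries.coeff_mul, Finset.Nat.sum_antidiagonal_eq_sum_range_succ_mk]
  simp [FA, FB]

lemma FA_mul (lam mu φ : ℝ) (y₁ y₂ : ℂ) :
    FA (lam + mu) φ (y₁ + y₂) = FA lam φ y₁ * FA mu φ y₂ := by
  ext m
  rw [PowerSeries.coeff_mul, Finset.Nat.sum_antidiagonal_eq_sum_range_succ_mk]
  simp only [FA, PowerSeries.coeff_mk]
  unfold Acoef
  have hsplit : (((lam + mu : ℝ)):ℂ) - Complex.I * (y₁ + y₂)
      = ((lam:ℂ) - Complex.I * y₁) + ((mu:ℂ) - Complex.I * y₂) := by push_cast; ring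
  rw [hsplit, pochC_vandermonde, Finset.sum_mul, Finset.sum_div]
  refine Finset.sum_congr rfl fun j hj => ?_
  have hj' : j ≤ m := Nat.lt_succ_iff.mp (Finset.mem_range.mp hj)
  have hch : ((m.choose j : ℕ) : ℂ) * ((j.factorial : ℂ) * ((m - j).factorial : ℂ))
      = (m.factorial : ℂ) := by
    rw [← Nat.cast_mul, ← Nat.cast_mul, ← mul_assoc]
    exact_mod_cast congrArg (Nat.cast (R := ℂ)) (Nat.choose_mul_factorial_mul_factorial hj')
  have hexp : Complex.exp ((j:ℂ) * φ * Complex.I)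
        * Complex.exp (((m - j : ℕ):ℂ) * φ * Complex.I)
      = Complex.exp ((m:ℂ) * φ * Complex.I) := by
    rw [← Complex.exp_add]
    congr 1
    push_cast [Nat.cast_sub hj']
    ring
  rw [div_mul_div_comm,
    div_eq_div_iff (factC_ne m) (mul_ne_zero (factC_ne j) (factC_ne (m-j)))]
  linear_combination (pochC ((lam:ℂ) - Complex.I * y₁) j
      * pochC ((mu:ℂ) - Complex.I * y₂) (m - j)
      * Complex.exp ((m:ℂ) * φ * Complex.I)) * hch
    - (pochC ((lam:ℂ) - Complex.I * y₁) j * pochC ((mu:ℂ) - Complex.I * y₂) (m - j)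
      * (m.factorial : ℂ)) * hexp

lemma FB_mul (lam mu φ : ℝ) (y₁ y₂ : ℂ) :
    FB (lam + mu) φ (y₁ + y₂) = FB lam φ y₁ * FB mu φ y₂ := by
  ext m
  rw [PowerSeries.coeff_mul, Finset.Nat.sum_antidiagonal_eq_sum_range_succ_mk]
  simp only [FB, PowerSeries.coeff_mk]
  unfold Bcoef
  have hsplit : (((lam + mu : ℝ)):ℂ) + Complex.I * (y₁ + y₂)
      = ((lam:ℂ) + Complex.I * y₁) + ((mu:ℂ) + Complex.I * y₂) := by push_cast; ring
  rw [hsplit, pochC_vandermonde, Finset.sum_mul, Finset.sum_div]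
  refine Finset.sum_congr rfl fun j hj => ?_
  have hj' : j ≤ m := Nat.lt_succ_iff.mp (Finset.mem_range.mp hj)
  have hch : ((m.choose j : ℕ) : ℂ) * ((j.factorial : ℂ) * ((m - j).factorial : ℂ))
      = (m.factorial : ℂ) := by
    rw [← Nat.cast_mul, ← Nat.cast_mul, ← mul_assoc]
    exact_mod_cast congrArg (Nat.cast (R := ℂ)) (Nat.choose_mul_factorial_mul_factorial hj')
  have hexp : Complex.exp (-((j:ℂ) * φ * Complex.I))
        * Complex.exp (-(((m - j : ℕ):ℂ) * φ * Complex.I))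
      = Complex.exp (-((m:ℂ) * φ * Complex.I)) := by
    rw [← Complex.exp_add]
    congr 1
    push_cast [Nat.cast_sub hj']
    ring
  rw [div_mul_div_comm,
    div_eq_div_iff (factC_ne m) (mul_ne_zero (factC_ne j) (factC_ne (m-j)))]
  linear_combination (pochC ((lam:ℂ) + Complex.I * y₁) j
      * pochC ((mu:ℂ) + Complex.I * y₂) (m - j)
      * Complex.exp (-((m:ℂ) * φ * Complex.I))) * hch
    - (pochC ((lam:ℂ) + Complex.I * y₁) j * pochC ((mu:ℂ) + Complex.I * y₂) (m - j)
      * (m.factorial : ℂ)) * hexp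

/-- the convolution identity for Meixner–Pollaczek polynomials:
`P_n^{(λ+μ)}(y₁ + y₂; φ) = Σ_{k=0}^n P_k^{(λ)}(y₁; φ) P_{n-k}^{(μ)}(y₂; φ)`. -/
theorem stmt_7 (lam mu : ℝ) (hlam : 0 < lam) (hmu : 0 < mu) (φ : ℝ)
    (y₁ y₂ : ℂ) (n : ℕ) :
    meixnerPollaczek n (lam + mu) φ (y₁ + y₂) =
      ∑ k ∈ Finset.range (n + 1),
        meixnerPollaczek k lam φ y₁ * meixnerPollaczek (n - k) mu φ y₂ := by
  have hP : ∀ (l : ℝ), 0 < l → ∀ (y : ℂ) (m : ℕ),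
      meixnerPollaczek m l φ y = (PowerSeries.coeff m) (FA l φ y * FB l φ y) := by
    intro l hl y m
    rw [coeff_FA_FB]
    exact stepA l φ y hl m
  rw [hP (lam + mu) (by linarith) (y₁ + y₂) n]
  rw [FA_mul, FB_mul]
  have hre : FA lam φ y₁ * FA mu φ y₂ * (FB lam φ y₁ * FB mu φ y₂)
      = (FA lam φ y₁ * FB lam φ y₁) * (FA mu φ y₂ * FB mu φ y₂) := by ring
  rw [hre, PowerSeries.coeff_mul, Finset.Nat.sum_antidiagonal_eq_sum_range_succ_mk]
  refine Finset.sum_congr rfl fun k hk => ?_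
  rw [hP lam hlam y₁ k, hP mu hmu y₂ (n - k)]
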